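/- Let V be a type, and let 𝒢 : (V →₀ ℕ) → [0,1) → ℝ satisfy: (i) for every configuration η, the map z ↦ 𝒢(η,z) is continuous on [0,1); (ii) 𝒢(η,·) ≡ 0 whenever |η| ≤ 1; (iii) for every η with n := |η| ≥ 2 and every z ∈ [0,1): 𝒢(η,z) = (1−z)^n · 𝒢(η,0) + (1−z)^n · ∫_0^z (1−u)^{−(n+1)} · (Σ_{i ∈ η.support} η_i · 𝒢(η − δ_i, u)) du. Then for every n ≥ 2, every x = (x_1,…,x_n) ∈ V^n and every z ∈ [0,1): 𝒢(φ(x), z) = Σ_{κ=2}^n z^{n−κ}·(1−z)^κ · Σ_{S ⊆ {1,…,n}, |S| = κ} 𝒢(φ(x|_S), 0), where x|_S denotes the subfamily (x_i)_{i ∈ S}. -/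

import Mathlib

/-- `φ((xᵢ)_{i ∈ S}) = ∑_{i ∈ S} δ_{xᵢ}` : the configuration of a subfamily of labeled
particle positions. -/
noncomputable def phiSub {V : Type*} {n : ℕ} (x : Fin n → V) (S : Finset (Fin n)) :
    V →₀ ℕ := ∑ i ∈ S, Finsupp.single (x i) 1

section Helpers
variable {V : Type*} [DecidableEq V] {n : ℕ} (x : Fin n → V)

lemma phiSub_apply (S : Finset (Fin n)) (v : V) :
    phiSub x S v = (S.filter fun j => x j = v).card := by
  classical
  rw [phiSub, Finsupp.finset_sum_apply, Finset.card_filter]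
  refine Finset.sum_congr rfl fun j _ => ?_
  rw [Finsupp.single_apply]

lemma support_phiSub (S : Finset (Fin n)) : (phiSub x S).support = S.image x := by
  classical
  ext v
  rw [Finsupp.mem_support_iff, phiSub_apply, Finset.mem_image]
  rw [← Nat.pos_iff_ne_zero, Finset.card_pos, Finset.filter_nonempty_iff]

omit [DecidableEq V] in
lemma mass_phiSub (S : Finset (Fin n)) :
    ∑ v ∈ (phiSub x S).support, phiSub x S v = S.card := by
  classical
  have h : (∑ v ∈ (phiSub x S).support, phiSub x S v) = (phiSub x S).sum fun _ m => m := rfl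
  rw [h, phiSub, ← Finsupp.sum_finsetSum_index (fun _ => rfl) (fun _ _ _ => rfl)]
  simp

omit [DecidableEq V] in
lemma phiSub_sub {S : Finset (Fin n)} {j : Fin n} (hj : j ∈ S) :
    phiSub x S - Finsupp.single (x j) 1 = phiSub x (S.erase j) := by
  have h : phiSub x S = Finsupp.single (x j) 1 + phiSub x (S.erase j) :=
    (Finset.add_sum_erase S _ hj).symm
  rw [h, add_tsub_cancel_left]

lemma sum_support_eq (S : Finset (Fin n)) (g : V → ℝ) :
    ∑ i ∈ (phiSub x S).support, ((phiSub x S) i : ℝ) * g i = ∑ j ∈ S, g (x j) := by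
  classical
  rw [Finset.sum_comp g x, support_phiSub]
  refine Finset.sum_congr rfl fun v _ => ?_
  rw [phiSub_apply, nsmul_eq_mul]

end Helpers

lemma count_lemma {ι : Type*} [DecidableEq ι] (S : Finset ι) (κ : ℕ) (f : Finset ι → ℝ) :
    ∑ j ∈ S, ∑ T ∈ (S.erase j).powersetCard κ, f T
      = ∑ T ∈ S.powersetCard κ, ((S.card - κ : ℕ) : ℝ) * f T := by
  have hset : ∀ j, (S.erase j).powersetCard κ
      = (S.powersetCard κ).filter (fun T => j ∉ T) := by
    intro j
    ext T
    simp [Finset.mem_powersetCard, Finset.subset_erase, and_assoc, and_comm, and_left_comm]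
  simp_rw [hset, Finset.sum_filter]
  rw [Finset.sum_comm]
  refine Finset.sum_congr rfl fun T hT => ?_
  obtain ⟨hTS, hTc⟩ := Finset.mem_powersetCard.mp hT
  rw [← Finset.sum_filter, Finset.sum_const, ← Finset.sdiff_eq_filter,
    Finset.card_sdiff_of_subset hTS, hTc, nsmul_eq_mul]

lemma myIntegralPow (p : ℕ) {z : ℝ} (h0 : 0 ≤ z) (h1 : z < 1) :
    ∫ u in (0:ℝ)..z, ((p:ℝ)+1) * u^p * ((1-u)^(p+2))⁻¹ = (z/(1-z))^(p+1) := by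
  have huIcc : Set.uIcc (0:ℝ) z = Set.Icc 0 z := Set.uIcc_of_le h0
  have hne : ∀ u ∈ Set.uIcc (0:ℝ) z, (1:ℝ) - u ≠ 0 := by
    intro u hu
    rw [huIcc, Set.mem_Icc] at hu
    nlinarith [hu.2]
  have hderiv : ∀ u ∈ Set.uIcc (0:ℝ) z,
      HasDerivAt (fun u : ℝ => (u/(1-u))^(p+1)) (((p:ℝ)+1) * u^p * ((1-u)^(p+2))⁻¹) u := by
    intro u hu
    have hu1 := hne u hu
    have h1d : HasDerivAt (fun u : ℝ => u/(1-u))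
        ((1 * (1-u) - u * (0-1)) / (1-u)^2) u :=
      (hasDerivAt_id u).div ((hasDerivAt_const u 1).sub (hasDerivAt_id u)) hu1
    have h2 := h1d.fun_pow (p+1)
    refine h2.congr_deriv (Eq.symm ?_)
    simp only [Nat.add_sub_cancel, Nat.cast_add, Nat.cast_one]
    rw [div_pow, show (1 * (1-u) - u * (0-1)) = 1 by ring]
    rw [mul_assoc, mul_assoc, div_mul_div_comm, mul_one, ← pow_add, div_eq_mul_inv]
  have hint : IntervalIntegrable (fun u : ℝ => ((p:ℝ)+1) * u^p * ((1-u)^(p+2))⁻¹)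
      MeasureTheory.volume 0 z := by
    apply ContinuousOn.intervalIntegrable
    apply ContinuousOn.mul (by fun_prop)
    exact ContinuousOn.inv₀ (by fun_prop) (fun u hu => pow_ne_zero _ (hne u hu))
  have := intervalIntegral.integral_eq_sub_of_hasDerivAt hderiv hint
  rw [this]
  norm_num

/-- **The difference of generating functions is determined by its values at 0**
(Theorem 5.2): if `𝒢` is continuous in `z`, vanishes on configurations with at most one
particle, and satisfies the integrated consistency recursion, then on the configuration
of `n ≥ 2` particles at positions `x` it is given by the stated polynomial in `z` with
coefficients the values `𝒢(·,0)` on `κ`-element subsamples. -/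
theorem stmt5 {V : Type*}
    (G : (V →₀ ℕ) → ℝ → ℝ)
    (hcont : ∀ η : V →₀ ℕ, ContinuousOn (G η) (Set.Ico 0 1))
    (hone : ∀ η : V →₀ ℕ, (∑ x ∈ η.support, η x) ≤ 1 →
        ∀ z ∈ Set.Ico (0 : ℝ) 1, G η z = 0)
    (hrec : ∀ η : V →₀ ℕ, 2 ≤ ∑ x ∈ η.support, η x →
        ∀ z ∈ Set.Ico (0 : ℝ) 1,
        G η z = (1 - z) ^ (∑ x ∈ η.support, η x) * G η 0
          + (1 - z) ^ (∑ x ∈ η.support, η x) *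
            ∫ u in (0 : ℝ)..z,
              ((1 - u) ^ ((∑ x ∈ η.support, η x) + 1))⁻¹ *
                ∑ i ∈ η.support, (η i : ℝ) * G (η - Finsupp.single i 1) u)
    (n : ℕ) (hn : 2 ≤ n) (x : Fin n → V) (z : ℝ) (hz : z ∈ Set.Ico (0 : ℝ) 1) :
    G (phiSub x Finset.univ) z
      = ∑ κ ∈ Finset.Icc 2 n, z ^ (n - κ) * (1 - z) ^ κ *
          ∑ S ∈ Finset.powersetCard κ (Finset.univ : Finset (Fin n)),
            G (phiSub x S) 0 := by
  classical
  suffices H : ∀ k : ℕ, ∀ S : Finset (Fin n), S.card = k → 2 ≤ k →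
      ∀ w ∈ Set.Ico (0:ℝ) 1, G (phiSub x S) w
        = ∑ κ ∈ Finset.Icc 2 k, w ^ (k - κ) * (1 - w) ^ κ *
            ∑ T ∈ Finset.powersetCard κ S, G (phiSub x T) 0 by
    simpa using H n Finset.univ (by simp) hn z hz
  intro k
  induction k using Nat.strong_induction_on with
  | _ k IH =>
  intro S hS hk2 w hw
  obtain ⟨hw0, hw1⟩ := hw
  have h1w : (1:ℝ) - w ≠ 0 := by nlinarith
  set C : ℕ → ℝ := fun κ => ∑ T ∈ Finset.powersetCard κ S, G (phiSub x T) 0 with hC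
  -- values on erased sets
  have hErase : ∀ j ∈ S, ∀ u ∈ Set.Ico (0:ℝ) 1,
      G (phiSub x (S.erase j)) u = ∑ κ ∈ Finset.Icc 2 (k-1),
        u ^ (k-1-κ) * (1-u) ^ κ *
          ∑ T ∈ Finset.powersetCard κ (S.erase j), G (phiSub x T) 0 := by
    intro j hj u hu
    have hcard : (S.erase j).card = k - 1 := by rw [Finset.card_erase_of_mem hj, hS]
    rcases eq_or_lt_of_le hk2 with h2 | h3
    · rw [show Finset.Icc 2 (k-1) = ∅ from Finset.Icc_eq_empty (by omega), Finset.sum_empty]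
      apply hone _ _ u hu
      rw [mass_phiSub, hcard]
      omega
    · exact IH (k-1) (by omega) _ hcard (by omega) u hu
  -- the inner sum rewritten
  have hsum : ∀ u ∈ Set.Ico (0:ℝ) 1,
      ∑ i ∈ (phiSub x S).support, ((phiSub x S) i : ℝ) *
          G (phiSub x S - Finsupp.single i 1) u
        = ∑ κ ∈ Finset.Icc 2 (k-1), ((k-κ : ℕ) : ℝ) * (u^(k-1-κ) * (1-u)^κ) * C κ := by
    intro u hu
    rw [sum_support_eq x S (fun v => G (phiSub x S - Finsupp.single v 1) u)]
    rw [Finset.sum_congr rfl (fun j hj => by rw [phiSub_sub x hj, hErase j hj u hu])]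
    rw [Finset.sum_comm]
    refine Finset.sum_congr rfl fun κ hκ => ?_
    simp_rw [mul_assoc, ← Finset.mul_sum]
    rw [count_lemma, hS, ← Finset.mul_sum, hC]
    ring
  -- the integral
  have hmemIco : ∀ u ∈ Set.uIcc (0:ℝ) w, u ∈ Set.Ico (0:ℝ) 1 := by
    intro u hu
    rw [Set.uIcc_of_le hw0, Set.mem_Icc] at hu
    exact ⟨hu.1, lt_of_le_of_lt hu.2 hw1⟩
  have hne : ∀ u ∈ Set.uIcc (0:ℝ) w, (1:ℝ) - u ≠ 0 := by
    intro u hu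
    have := (hmemIco u hu).2
    nlinarith
  have hintg : ∀ κ ∈ Finset.Icc 2 (k-1), IntervalIntegrable
      (fun u : ℝ => C κ * ((((k-κ-1 : ℕ) : ℝ)+1) * u^(k-κ-1) * ((1-u)^(k-κ-1+2))⁻¹))
      MeasureTheory.volume 0 w := by
    intro κ hκ
    apply IntervalIntegrable.const_mul
    apply ContinuousOn.intervalIntegrable
    apply ContinuousOn.mul (by fun_prop)
    exact ContinuousOn.inv₀ (by fun_prop) (fun u hu => pow_ne_zero _ (hne u hu))
  have heq : Set.EqOn
      (fun u : ℝ => ((1-u) ^ (k+1))⁻¹ * ∑ i ∈ (phiSub x S).support,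
        ((phiSub x S) i : ℝ) * G (phiSub x S - Finsupp.single i 1) u)
      (fun u : ℝ => ∑ κ ∈ Finset.Icc 2 (k-1),
        C κ * ((((k-κ-1 : ℕ) : ℝ)+1) * u^(k-κ-1) * ((1-u)^(k-κ-1+2))⁻¹))
      (Set.uIcc 0 w) := by
    intro u hu
    simp only
    rw [hsum u (hmemIco u hu), Finset.mul_sum]
    refine Finset.sum_congr rfl fun κ hκ => ?_
    rw [Finset.mem_Icc] at hκ
    obtain ⟨p, hp⟩ : ∃ p, k - κ = p + 1 := ⟨k - κ - 1, by omega⟩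
    have h1 : k - 1 - κ = p := by omega
    have h2 : k - κ - 1 = p := by omega
    have h3 : k + 1 = κ + (p + 2) := by omega
    have h4 : ((k - κ : ℕ) : ℝ) = (p : ℝ) + 1 := by rw [hp]; push_cast; ring
    rw [h1, h2, h3, h4, pow_add, mul_inv]
    have hp1 : ((1:ℝ)-u)^κ ≠ 0 := pow_ne_zero _ (hne u hu)
    have hp2 : ((1:ℝ)-u)^(p+2) ≠ 0 := pow_ne_zero _ (hne u hu)
    field_simp
  have hInt : (∫ u in (0:ℝ)..w, ((1-u) ^ (k+1))⁻¹ *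
        ∑ i ∈ (phiSub x S).support, ((phiSub x S) i : ℝ) *
          G (phiSub x S - Finsupp.single i 1) u)
      = ∑ κ ∈ Finset.Icc 2 (k-1), C κ * (w/(1-w))^(k-κ) := by
    rw [intervalIntegral.integral_congr heq, intervalIntegral.integral_finset_sum hintg]
    refine Finset.sum_congr rfl fun κ hκ => ?_
    rw [Finset.mem_Icc] at hκ
    rw [intervalIntegral.integral_const_mul, myIntegralPow _ hw0 hw1,
      show k - κ - 1 + 1 = k - κ by omega]
  -- conclude
  have hr := hrec (phiSub x S) (by rw [mass_phiSub, hS]; omega) w ⟨hw0, hw1⟩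
  rw [mass_phiSub, hS] at hr
  rw [hr, hInt]
  have hsplit : Finset.Icc 2 k = insert k (Finset.Icc 2 (k-1)) := by
    ext m
    simp only [Finset.mem_Icc, Finset.mem_insert]
    omega
  rw [hsplit, Finset.sum_insert (by simp only [Finset.mem_Icc]; omega)]
  have hCk : C k = G (phiSub x S) 0 := by
    rw [hC]
    simp only [← hS, Finset.powersetCard_self, Finset.sum_singleton]
  rw [Finset.mul_sum]
  congr 1
  · rw [Nat.sub_self, pow_zero, one_mul, ← hS, Finset.powersetCard_self,
      Finset.sum_singleton]
  · refine Finset.sum_congr rfl fun κ hκ => ?_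
    rw [Finset.mem_Icc] at hκ
    obtain ⟨m, hm⟩ : ∃ m, k = κ + m := ⟨k - κ, by omega⟩
    have h5 : k - κ = m := by omega
    rw [h5, hm, pow_add, div_pow]
    field_simp
    ring
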